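/- Let d ≥ 2, T > 0, n ≥ 2, vectors w_1, …, w_{n−1} ∈ ℝ^d, and reals b_1 > b_2 > ⋯ > b_{n−1}. Let x_n, y_n ∈ ℝ^d with x_n ≠ y_n, x_n^{(1)} + b_{n−1} > 0 and y_n^{(1)} + b_{n−1} > 0. Then there exist w_n ∈ ℝ^d and b_n ∈ ℝ with b_n < b_{n−1}, x_n^{(1)} + b_n > 0 and y_n^{(1)} + b_n > 0, such that the solution of the Cauchy problem ẋ(t) = Σ_{i=1}^{n−1} w_i · max(x^{(1)}(t) + b_i, 0) + w_n · max(x^{(1)}(t) + b_n, 0), x(0) = x_n, satisfies x(T) = y_n. -/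

import Mathlib

open Set Filter

noncomputable section

/-- `Phi a t = ∫₀ᵗ exp (a s) ds`, written without an integral. -/
noncomputable def Phi (a t : ℝ) : ℝ := if a = 0 then t else (Real.exp (a*t) - 1)/a

/-- `Psi a t = ∫₀ᵗ Phi a s ds`, written without an integral. -/
noncomputable def Psi (a t : ℝ) : ℝ := if a = 0 then t^2/2 else (Phi a t - t)/a

lemma Phi_zero (a : ℝ) : Phi a 0 = 0 := by unfold Phi; split <;> simp
lemma Psi_zero (a : ℝ) : Psi a 0 = 0 := by unfold Psi; split <;> simp [Phi_zero]

lemma mul_Phi (a t : ℝ) : a * Phi a t = Real.exp (a*t) - 1 := by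
  unfold Phi; split
  · simp_all
  · field_simp

lemma Psi_Phi (a t : ℝ) : t + a * Psi a t = Phi a t := by
  unfold Psi; split
  · simp_all [Phi]
  · field_simp
    ring

lemma hasDerivAt_exp_mul (a t : ℝ) :
    HasDerivAt (fun s => Real.exp (a*s)) (Real.exp (a*t) * a) t := by
  simpa using ((hasDerivAt_id t).const_mul a).exp

lemma hasDerivAt_Phi (a t : ℝ) : HasDerivAt (Phi a) (Real.exp (a*t)) t := by
  rcases eq_or_ne a 0 with rfl | h
  · have he : Phi 0 = fun t => t := by funext s; simp [Phi]
    rw [he]; simpa using (hasDerivAt_id' t)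
  · have he : Phi a = fun s => (Real.exp (a*s) - 1)/a := by funext s; simp [Phi, h]
    rw [he]
    have := ((hasDerivAt_exp_mul a t).sub_const 1).div_const a
    have h2 : Real.exp (a*t) * a / a = Real.exp (a*t) := by field_simp
    rwa [h2] at this

lemma hasDerivAt_Psi (a t : ℝ) : HasDerivAt (Psi a) (Phi a t) t := by
  rcases eq_or_ne a 0 with rfl | h
  · have he : Psi 0 = fun t => t^2/2 := by funext s; simp [Psi]
    rw [he]
    have : HasDerivAt (fun t : ℝ => t^2/2) t t := by
      simpa using (hasDerivAt_pow 2 t).div_const 2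
    simpa [Phi] using this
  · have he : Psi a = fun s => (Phi a s - s)/a := by funext s; simp [Psi, h]
    rw [he]
    have := ((hasDerivAt_Phi a t).sub (hasDerivAt_id t)).div_const a
    have h2 : (Real.exp (a*t) - 1) / a = Phi a t := by simp [Phi, h]
    rwa [h2] at this

lemma Phi_strictMono (a : ℝ) : StrictMono (Phi a) := by
  apply strictMono_of_deriv_pos
  intro t
  rw [(hasDerivAt_Phi a t).deriv]
  positivity

lemma continuous_PhiT (T : ℝ) : Continuous (fun a => Phi a T) := by
  rw [continuous_iff_continuousAt]
  intro a
  rcases eq_or_ne a 0 with rfl | h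
  · have hder : HasDerivAt (fun a : ℝ => Real.exp (a*T)) T 0 := by
      have := hasDerivAt_exp_mul T 0
      simp only [mul_zero, Real.exp_zero, one_mul] at this
      have h2 : (fun s => Real.exp (T*s)) = (fun a : ℝ => Real.exp (a*T)) := by
        funext s; rw [mul_comm]
      rwa [h2] at this
    have hslope := hasDerivAt_iff_tendsto_slope.mp hder
    have hcongr : Tendsto (fun a => Phi a T) (nhdsWithin 0 {(0:ℝ)}ᶜ) (nhds T) := by
      apply hslope.congr'
      filter_upwards [self_mem_nhdsWithin] with x hx
      simp only [mem_compl_iff, mem_singleton_iff] at hx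
      simp [slope, Phi, hx, sub_zero, div_eq_inv_mul, mul_comm]
    unfold ContinuousAt
    rw [show (fun a => Phi a T) 0 = T by simp [Phi]]
    rw [← nhdsNE_sup_pure (0:ℝ)]
    rw [tendsto_sup]
    exact ⟨hcongr, by rw [tendsto_pure_left]; intro s hs; simpa [Phi] using mem_of_mem_nhds hs⟩
  · have hev : (fun a => Phi a T) =ᶠ[nhds a] (fun x => (Real.exp (x*T) - 1)/x) := by
      filter_upwards [isOpen_ne.mem_nhds (x := a) h] with x hx
      simp [Phi, hx]
    refine ContinuousAt.congr ?_ hev.symm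
    exact ContinuousAt.div
      ((Real.continuous_exp.comp (continuous_id.mul continuous_const)).continuousAt.sub continuousAt_const)
      continuousAt_id h

lemma tendsto_PhiT_atBot {T : ℝ} (hT : 0 < T) :
    Filter.Tendsto (fun x => Phi x T) Filter.atBot (nhds 0) := by
  apply tendsto_of_tendsto_of_tendsto_of_le_of_le' tendsto_const_nhds
    (show Filter.Tendsto (fun x : ℝ => -x⁻¹) Filter.atBot (nhds 0) by
      have h1 : Filter.Tendsto (fun x : ℝ => x⁻¹) Filter.atTop (nhds 0) := tendsto_inv_atTop_zero
      have h2 : Filter.Tendsto (fun x : ℝ => -x) Filter.atBot Filter.atTop := tendsto_neg_atBot_atTop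
      refine (h1.comp h2).congr fun x => ?_
      simp [Function.comp, inv_neg])
  · filter_upwards [Filter.eventually_le_atBot (-1 : ℝ)] with x hx
    have hx0 : x < 0 := lt_of_le_of_lt hx (by norm_num)
    have hxe : Real.exp (x*T) ≤ 1 := Real.exp_le_one_iff.mpr (by nlinarith)
    rw [show Phi x T = (Real.exp (x*T) - 1)/x by simp [Phi, ne_of_lt hx0]]
    rw [div_nonneg_iff]
    exact Or.inr ⟨by linarith, hx0.le⟩
  · filter_upwards [Filter.eventually_le_atBot (-1 : ℝ)] with x hx
    have hx0 : x < 0 := lt_of_le_of_lt hx (by norm_num)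
    rw [show Phi x T = (Real.exp (x*T) - 1)/x by simp [Phi, ne_of_lt hx0]]
    rw [div_le_iff_of_neg hx0]
    have h1 : -x⁻¹ * x = -1 := by rw [neg_mul, inv_mul_cancel₀ (ne_of_lt hx0)]
    rw [h1]
    have := Real.exp_pos (x*T)
    linarith

lemma tendsto_aux_atBot {T z0 k : ℝ} (hT : 0 < T) :
    Filter.Tendsto (fun x => z0 * Real.exp (x*T) + k * Phi x T) Filter.atBot (nhds 0) := by
  have tmul : Filter.Tendsto (fun x : ℝ => x * T) Filter.atBot Filter.atBot :=
    Filter.Tendsto.atBot_mul_const hT tendsto_id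
  have texp : Filter.Tendsto (fun x : ℝ => Real.exp (x*T)) Filter.atBot (nhds 0) :=
    Real.tendsto_exp_atBot.comp tmul
  have := (texp.const_mul z0).add ((tendsto_PhiT_atBot hT).const_mul k)
  simpa using this

lemma tendsto_aux_atTop {T z0 k : ℝ} (hT : 0 < T) (hz0 : 0 < z0) :
    Filter.Tendsto (fun x => z0 * Real.exp (x*T) + k * Phi x T) Filter.atTop Filter.atTop := by
  refine tendsto_atTop_mono' Filter.atTop
    (f₁ := fun x => z0/2 * Real.exp (x*T) - 1) ?_ ?_
  · filter_upwards [Filter.eventually_ge_atTop (1:ℝ), Filter.eventually_ge_atTop (2*|k|/z0)]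
      with x h1 h2
    have hx0 : (0:ℝ) < x := lt_of_lt_of_le one_pos h1
    have hPhi : Phi x T = (Real.exp (x*T) - 1)/x := by simp [Phi, ne_of_gt hx0]
    have he1 : 1 ≤ Real.exp (x*T) := Real.one_le_exp (mul_nonneg hx0.le hT.le)
    have hk2 : 2*|k| ≤ z0 * x := by
      rw [div_le_iff₀ hz0] at h2; linarith
    rw [hPhi]
    have hD0 : 0 ≤ (Real.exp (x*T) - 1)/x := div_nonneg (by linarith) hx0.le
    have h3 : 2*|k| * ((Real.exp (x*T) - 1)/x) ≤ z0 * x * ((Real.exp (x*T) - 1)/x) :=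
      mul_le_mul_of_nonneg_right hk2 hD0
    have h4 : z0 * x * ((Real.exp (x*T) - 1)/x) = z0 * (Real.exp (x*T) - 1) := by
      field_simp
    have h5 : -|k| * ((Real.exp (x*T) - 1)/x) ≤ k * ((Real.exp (x*T) - 1)/x) :=
      mul_le_mul_of_nonneg_right (neg_abs_le k) hD0
    nlinarith [abs_nonneg k]
  · have t1 : Filter.Tendsto (fun x : ℝ => x * T) Filter.atTop Filter.atTop :=
      Filter.Tendsto.atTop_mul_const hT tendsto_id
    have t2 : Filter.Tendsto (fun x : ℝ => Real.exp (x*T)) Filter.atTop Filter.atTop :=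
      Real.tendsto_exp_atTop.comp t1
    have t3 : Filter.Tendsto (fun x : ℝ => z0/2 * Real.exp (x*T)) Filter.atTop Filter.atTop :=
      t2.const_mul_atTop (by positivity)
    simpa [sub_eq_add_neg] using Filter.tendsto_atTop_add_const_right Filter.atTop (-1 : ℝ) t3

set_option maxHeartbeats 1000000 in
/-- One more neuron suffices to steer a new point against the drift created by
`m = n - 1` previously fixed neurons whose biases satisfy `b₁ > ⋯ > b_{n-1}`. -/
theorem statement8 (d m : ℕ) (hd : 2 ≤ d) (hm : 1 ≤ m) (T : ℝ) (hT : 0 < T)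
    (w : Fin m → EuclideanSpace ℝ (Fin d)) (b : Fin m → ℝ) (hb : StrictAnti b)
    (xn yn : EuclideanSpace ℝ (Fin d)) (hxy : xn ≠ yn)
    (hx : xn ⟨0, by omega⟩ + b ⟨m - 1, by omega⟩ > 0)
    (hy : yn ⟨0, by omega⟩ + b ⟨m - 1, by omega⟩ > 0) :
    ∃ (wn : EuclideanSpace ℝ (Fin d)) (bn : ℝ),
      bn < b ⟨m - 1, by omega⟩ ∧
      xn ⟨0, by omega⟩ + bn > 0 ∧ yn ⟨0, by omega⟩ + bn > 0 ∧
      ∃ γ : ℝ → EuclideanSpace ℝ (Fin d),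
        γ 0 = xn ∧ γ T = yn ∧
        ∀ t ∈ Set.Icc (0 : ℝ) T,
          HasDerivWithinAt γ
            ((∑ i : Fin m, max (γ t ⟨0, by omega⟩ + b i) 0 • w i) +
              max (γ t ⟨0, by omega⟩ + bn) 0 • wn)
            (Set.Icc (0 : ℝ) T) t := by
  classical
  have hd0 : 0 < d := by omega
  have hm0 : m - 1 < m := by omega
  set i0 : Fin d := ⟨0, hd0⟩ with hi0def
  set lst : Fin m := ⟨m - 1, hm0⟩ with hlstdef
  have hx' : xn i0 + b lst > 0 := hx
  have hy' : yn i0 + b lst > 0 := hy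
  set p := xn i0 with hp
  set q := yn i0 with hq
  set ε : ℝ := (min p q + b lst) / 2 with hεdef
  have hmin0 : 0 < min p q + b lst := by
    rcases min_cases p q with ⟨h1, _⟩ | ⟨h1, _⟩ <;> rw [h1] <;> linarith
  have hε0 : 0 < ε := by rw [hεdef]; linarith
  set bn : ℝ := b lst - ε with hbndef
  have hbnlt : bn < b lst := by rw [hbndef]; linarith
  set z0 : ℝ := p + bn with hz0def
  set z1 : ℝ := q + bn with hz1def
  have hz0 : 0 < z0 := by
    rw [hz0def, hbndef, hεdef]; linarith [min_le_left p q]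
  have hz1 : 0 < z1 := by
    rw [hz1def, hbndef, hεdef]; linarith [min_le_right p q]
  set W : EuclideanSpace ℝ (Fin d) := ∑ i, w i with hWdef
  set Bv : EuclideanSpace ℝ (Fin d) := ∑ i, b i • w i with hBvdef
  set k : ℝ := Bv i0 - bn * W i0 with hkdef
  set hf : ℝ → ℝ := fun x => z0 + (x * z0 + k) * Phi x T with hhdef
  have hcont : Continuous hf := by
    apply continuous_const.add
    exact ((continuous_id.mul continuous_const).add continuous_const).mul (continuous_PhiT T)
  have hform : ∀ x : ℝ, hf x = z0 * Real.exp (x*T) + k * Phi x T := by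
    intro x
    have hmp := mul_Phi x T
    simp only [hhdef]
    linear_combination z0 * hmp
  have hbot : Filter.Tendsto hf atBot (nhds 0) :=
    Filter.Tendsto.congr (fun x => (hform x).symm) (tendsto_aux_atBot hT)
  have htop : Filter.Tendsto hf atTop atTop :=
    Filter.Tendsto.congr (fun x => (hform x).symm) (tendsto_aux_atTop hT hz0)
  obtain ⟨am, ham⟩ := (hbot.eventually_lt_const hz1).exists
  obtain ⟨ap, hap⟩ := (htop.eventually_gt_atTop z1).exists
  have hz1mem : z1 ∈ uIcc (hf am) (hf ap) := mem_uIcc.mpr (Or.inl ⟨ham.le, hap.le⟩)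
  obtain ⟨a, -, hroot⟩ := intermediate_value_uIcc hcont.continuousOn hz1mem
  -- the trajectory data
  set c0 : ℝ := a * z0 + k with hc0def
  set z : ℝ → ℝ := fun t => z0 + c0 * Phi a t with hzdef
  set Zf : ℝ → ℝ := fun t => z0 * t + c0 * Psi a t with hZfdef
  have hzT : z T = z1 := hroot
  have hzmin : ∀ t ∈ Icc (0:ℝ) T, min z0 z1 ≤ z t := by
    intro t ht
    have h1 : Phi a 0 ≤ Phi a t := (Phi_strictMono a).monotone ht.1
    have h2 : Phi a t ≤ Phi a T := (Phi_strictMono a).monotone ht.2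
    rw [Phi_zero] at h1
    rcases le_or_gt 0 c0 with hc | hc
    · have : z0 ≤ z t := by
        simp only [hzdef]; nlinarith
      exact le_trans (min_le_left _ _) this
    · have : z1 ≤ z t := by
        rw [← hzT]; simp only [hzdef]; nlinarith
      exact le_trans (min_le_right _ _) this
  have hzpos : ∀ t ∈ Icc (0:ℝ) T, 0 < z t :=
    fun t ht => lt_of_lt_of_le (lt_min hz0 hz1) (hzmin t ht)
  have hZderiv : ∀ t, HasDerivAt Zf (z t) t := by
    intro t
    show HasDerivAt (fun s => z0 * s + c0 * Psi a s) (z0 + c0 * Phi a t) t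
    have h0 := ((hasDerivAt_id t).const_mul z0).add ((hasDerivAt_Psi a t).const_mul c0)
    simp only [mul_one] at h0
    exact h0
  have hZf0 : Zf 0 = 0 := by simp [hZfdef, Psi_zero]
  have hZfT : 0 < Zf T := by
    have hsm : StrictMonoOn Zf (Icc (0:ℝ) T) := by
      apply strictMonoOn_of_deriv_pos (convex_Icc 0 T)
      · have hdiff : Differentiable ℝ Zf := fun t => (hZderiv t).differentiableAt
        exact hdiff.continuous.continuousOn
      · intro t ht
        rw [interior_Icc] at ht
        rw [(hZderiv t).deriv]
        exact hzpos t ⟨ht.1.le, ht.2.le⟩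
    have := hsm (left_mem_Icc.mpr hT.le) (right_mem_Icc.mpr hT.le) hT
    rwa [hZf0] at this
  have hZfne : Zf T ≠ 0 := ne_of_gt hZfT
  set u : EuclideanSpace ℝ (Fin d) := yn - xn with hudef
  set Cv : EuclideanSpace ℝ (Fin d) := Bv - bn • W with hCvdef
  set A : EuclideanSpace ℝ (Fin d) := (Zf T)⁻¹ • (u - T • Cv) with hAdef
  set wn : EuclideanSpace ℝ (Fin d) := A - W with hwndef
  have hCi0 : Cv i0 = k := by
    rw [hCvdef, hkdef]
    simp [PiLp.sub_apply, PiLp.smul_apply]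
  have hui0 : u i0 = q - p := by rw [hudef]; simp [PiLp.sub_apply, hp, hq]
  have key : ∀ t, Zf t * a + t * k = c0 * Phi a t := by
    intro t
    simp only [hZfdef]
    linear_combination c0 * (Psi_Phi a t) - t * hc0def
  have hc0PhiT : c0 * Phi a T = z1 - z0 := by
    have h1 : hf a = z1 := hroot
    rw [hhdef] at h1
    simp only at h1
    rw [← hc0def] at h1
    linarith [h1]
  have hAi0 : A i0 = a := by
    have hk1 := key T
    have h2 : A i0 = (Zf T)⁻¹ * (u i0 - T * Cv i0) := by
      rw [hAdef]; simp [PiLp.smul_apply, PiLp.sub_apply]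
    rw [h2, hui0, hCi0]
    have hqp : q - p = z1 - z0 := by rw [hz0def, hz1def]; ring
    rw [hqp, ← hc0PhiT, ← hk1]
    field_simp
    ring
  set γ : ℝ → EuclideanSpace ℝ (Fin d) := fun t => xn + Zf t • A + t • Cv with hγdef
  have hγcoord : ∀ t, γ t i0 = z t - bn := by
    intro t
    have h1 : γ t i0 = p + (Zf t * A i0 + t * Cv i0) := by
      rw [hγdef]
      simp [PiLp.add_apply, PiLp.smul_apply, hp]
      ring
    rw [h1, hAi0, hCi0, key t]
    simp only [hzdef, hz0def]
    ring
  refine ⟨wn, bn, hbnlt, ?_, ?_, γ, ?_, ?_, ?_⟩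
  · exact hz0
  · exact hz1
  · show xn + Zf 0 • A + (0:ℝ) • Cv = xn
    rw [hZf0]
    simp
  · have hAT : Zf T • A = u - T • Cv := by
      rw [hAdef, smul_smul, mul_inv_cancel₀ hZfne, one_smul]
    show xn + Zf T • A + T • Cv = yn
    rw [hAT, hudef]
    abel
  · intro t ht
    have hder : HasDerivAt γ (z t • A + Cv) t := by
      have h0 := ((hasDerivAt_const t xn).add ((hZderiv t).smul_const A)).add
        ((hasDerivAt_id t).smul_const Cv)
      simp only [zero_add, one_smul] at h0
      exact h0
    have hzt := hzpos t ht
    have heq : (∑ i : Fin m, max (γ t i0 + b i) 0 • w i) + max (γ t i0 + bn) 0 • wn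
        = z t • A + Cv := by
      have hbi : ∀ i : Fin m, max (γ t i0 + b i) 0 = (z t - bn) + b i := by
        intro i
        rw [hγcoord t]
        apply max_eq_left
        have hble : b lst ≤ b i := by
          apply hb.antitone
          have h2 := i.isLt
          rw [hlstdef, Fin.le_def]
          show (i:ℕ) ≤ m - 1
          omega
        have hbne : bn = b lst - ε := hbndef
        linarith
      have hbn' : max (γ t i0 + bn) 0 = z t := by
        rw [hγcoord t, show z t - bn + bn = z t by ring]
        exact max_eq_left hzt.le
      simp only [hbi, hbn']
      have hsum : ∑ i : Fin m, ((z t - bn) + b i) • w i = (z t - bn) • W + Bv := by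
        rw [hWdef, hBvdef, Finset.smul_sum, ← Finset.sum_add_distrib]
        exact Finset.sum_congr rfl (fun i _ => by rw [add_smul])
      rw [hsum, hwndef, hCvdef]
      module
    have hfinal := hder.hasDerivWithinAt (s := Icc (0:ℝ) T)
    rw [← heq] at hfinal
    exact hfinal
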